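/- Inductive lower bounds on expected runtimes: let t and I be finite expectations such that I harmonizes with t, I is conditionally difference bounded, and Φ_t(I) is finite (where Φ_t is the wp-characteristic function with postexpectation t). If I ⪯ Ψ_t(I) (I is a runtime subinvariant), then I ⪯ lfp Ψ_t, i.e., I is a lower bound on the expected runtime ert(while φ do C)(t) of the loop. -/

import Mathlib

open MeasureTheory Filter Topology
open scoped Classical ENNReal ENat NNReal

/-! Loop model: states `S`, guard `φ : Set S`, loop-body transition probabilities
`μ : S → S → ℝ≥0`. Expectations are functions `S → ℝ≥0∞` with the pointwise order. -/

variable {S : Type*}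

/-- One-step weakest preexpectation of the loop body:
`wpF μ X s = ∑_{s'} μ s s' * X s'`. -/
noncomputable def wpF (μ : S → S → ℝ≥0) (X : S → ℝ≥0∞) (s : S) : ℝ≥0∞ :=
  ∑' s', (μ s s' : ℝ≥0∞) * X s'

/-- The characteristic function `Φ_f` of the loop `while φ do C` with respect to the
postexpectation `f`. -/
noncomputable def Phi (φ : Set S) (μ : S → S → ℝ≥0) (f : S → ℝ≥0∞)
    (X : S → ℝ≥0∞) (s : S) : ℝ≥0∞ :=
  if s ∈ φ then wpF μ X s else f s

theorem Phi_mono (φ : Set S) (μ : S → S → ℝ≥0) (f : S → ℝ≥0∞) :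
    Monotone (Phi φ μ f) := by
  intro X Y h s
  unfold Phi wpF
  split_ifs with hs
  · exact ENNReal.tsum_le_tsum fun s' => mul_le_mul' le_rfl (h s')
  · exact le_rfl

/-- Least fixed point of the characteristic function `Φ_f`,
i.e. the weakest preexpectation `wp(while φ do C)(f)`. -/
noncomputable def lfpPhi (φ : Set S) (μ : S → S → ℝ≥0) (f : S → ℝ≥0∞) : S → ℝ≥0∞ :=
  OrderHom.lfp ⟨Phi φ μ f, Phi_mono φ μ f⟩

/-- A finite expectation: `X s < ∞` for all states. -/
def FinExp (X : S → ℝ≥0∞) : Prop := ∀ s, X s < ⊤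

/-- A bounded expectation: `X s ≤ c` for some constant `c : ℝ≥0`. -/
def BddExp (X : S → ℝ≥0∞) : Prop := ∃ c : ℝ≥0, ∀ s, X s ≤ (c : ℝ≥0∞)

/-- `I` harmonizes with `f` if `I` agrees with `f` on all terminal states (states
outside the guard). -/
def Harmonizes (φ : Set S) (I f : S → ℝ≥0∞) : Prop := ∀ s ∉ φ, I s = f s

/-- `ΔI`: the expected change of `I` within one loop iteration. -/
noncomputable def dExp (φ : Set S) (μ : S → S → ℝ≥0) (I : S → ℝ≥0∞) (s : S) : ℝ≥0∞ :=
  if s ∈ φ then ∑' s', (μ s s' : ℝ≥0∞) * ((I s' - I s) ⊔ (I s - I s')) else 0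

/-- `I` is conditionally difference bounded if `ΔI` is bounded by a constant. -/
def CondDiffBdd (φ : Set S) (μ : S → S → ℝ≥0) (I : S → ℝ≥0∞) : Prop :=
  ∃ c : ℝ≥0, ∀ s, dExp φ μ I s ≤ (c : ℝ≥0∞)

/-! The loop space `Ω := ℕ → S` with its product σ-algebra (`S` discrete). -/

/-- The cylinder set of a finite sequence of states. -/
def Cyl (π : List S) : Set (ℕ → S) := {ϑ | ∀ i : Fin π.length, ϑ i = π.get i}

/-- The σ-algebra `F_n`, generated by the cylinder sets of sequences of length `n+1`. -/
def Fn (n : ℕ) : MeasurableSpace (ℕ → S) :=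
  MeasurableSpace.generateFrom {A | ∃ π : List S, π.length = n + 1 ∧ A = Cyl π}

/-- The shifted filtration `G_n := F_{n+1}`. -/
def Gn (n : ℕ) : MeasurableSpace (ℕ → S) := Fn (n + 1)

/-- One-step transition probability of the loop: from a state `a` inside the guard move
according to `μ`; a state outside the guard is absorbing. -/
noncomputable def stepP (φ : Set S) (μ : S → S → ℝ≥0) (a b : S) : ℝ≥0 :=
  if a ∈ φ then μ a b else if b = a then 1 else 0

/-- Product of the one-step transition probabilities along a finite sequence. -/
noncomputable def chainP (φ : Set S) (μ : S → S → ℝ≥0) : List S → ℝ≥0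
  | [] => 1
  | [_] => 1
  | a :: b :: rest => stepP φ μ a b * chainP φ μ (b :: rest)

/-- The prefix probability `p_s(π)` of the finite sequence `π` of states, starting the
loop in the state `s`. -/
noncomputable def prefP (φ : Set S) (μ : S → S → ℝ≥0) (s : S) (π : List S) : ℝ≥0 :=
  (if π.head? = some s then 1 else 0) * chainP φ μ π

/-- The looping time `τ`: the first time the run leaves the guard. -/
noncomputable def loopT (φ : Set S) (ϑ : ℕ → S) : ℕ∞ :=
  sInf {n : ℕ∞ | ∃ m : ℕ, n = (m : ℕ∞) ∧ ϑ m ∉ φ}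

/-- The stochastic process `X_n^{f,I}` induced by the invariant `I` (w.r.t. the
postexpectation `f`). -/
noncomputable def Xn (φ : Set S) (f I : S → ℝ≥0∞) (n : ℕ) (ϑ : ℕ → S) : ℝ≥0∞ :=
  if loopT φ ϑ ≤ (n : ℕ∞) then f (ϑ (loopT φ ϑ).toNat) else I (ϑ (n + 1))

/-- The stopped process `X_τ^f`. -/
noncomputable def Xstop (φ : Set S) (f : S → ℝ≥0∞) (ϑ : ℕ → S) : ℝ≥0∞ :=
  if loopT φ ϑ < ⊤ then f (ϑ (loopT φ ϑ).toNat) else 0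

/-- The `ert`-characteristic function `Ψ_t` of the loop, where `e` is the expected
runtime of the loop body and `t` is the postruntime. -/
noncomputable def Psi (φ : Set S) (μ : S → S → ℝ≥0) (e t : S → ℝ≥0∞)
    (X : S → ℝ≥0∞) (s : S) : ℝ≥0∞ :=
  if s ∈ φ then 1 + e s + wpF μ X s else 1 + t s

theorem Psi_mono (φ : Set S) (μ : S → S → ℝ≥0) (e t : S → ℝ≥0∞) :
    Monotone (Psi φ μ e t) := by
  intro X Y h s
  unfold Psi wpF
  split_ifs with hs
  · exact add_le_add le_rfl (ENNReal.tsum_le_tsum fun s' => mul_le_mul' le_rfl (h s'))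
  · exact le_rfl

/-- The expected runtime `ert(while φ do C)(t)` of the loop: the least fixed point of the
`ert`-characteristic function `Ψ_t`. -/
noncomputable def lfpPsi (φ : Set S) (μ : S → S → ℝ≥0) (e t : S → ℝ≥0∞) : S → ℝ≥0∞ :=
  OrderHom.lfp ⟨Psi φ μ e t, Psi_mono φ μ e t⟩

section LBAux

lemma tsum_iInf_antitone' {S : Type*} [Countable S] {f : ℕ → S → ℝ≥0∞}
    (hanti : ∀ u, Antitone fun n => f n u) (hfin : ∑' u, f 0 u ≠ ⊤) :
    ⨅ n, ∑' u, f n u = ∑' u, ⨅ n, f n u := by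
  letI : MeasurableSpace S := ⊤
  haveI : MeasurableSingletonClass S := ⟨fun _ => MeasurableSpace.measurableSet_top⟩
  have h1 : ∀ g : S → ℝ≥0∞, ∑' u, g u = ∫⁻ u, g u ∂MeasureTheory.Measure.count := fun g =>
    (MeasureTheory.lintegral_count _).symm
  simp_rw [h1]
  exact (MeasureTheory.lintegral_iInf
    (fun n => (by exact fun _ _ => MeasurableSpace.measurableSet_top : Measurable (f n)))
    (fun a b hab u => hanti u hab) (by rw [← h1 (f 0)]; exact hfin)).symm

variable {S : Type*} (φ : Set S) (μ : S → S → ℝ≥0)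

/-- The "stopped" one-step transition operator of the loop. -/
noncomputable def Kop (X : S → ℝ≥0∞) (s : S) : ℝ≥0∞ :=
  if s ∈ φ then ∑' s', (μ s s' : ℝ≥0∞) * X s' else X s

lemma Kop_mono : Monotone (Kop φ μ) := by
  intro X Y h s; unfold Kop; split_ifs
  · exact ENNReal.tsum_le_tsum fun s' => mul_le_mul_right (h s') _
  · exact h s

lemma Kop_add (X Y : S → ℝ≥0∞) :
    Kop φ μ (fun u => X u + Y u) = fun s => Kop φ μ X s + Kop φ μ Y s := by
  funext s; unfold Kop; split_ifs
  · simp_rw [mul_add]; exact ENNReal.tsum_add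
  · rfl

lemma Kop_smul (a : ℝ≥0∞) (X : S → ℝ≥0∞) :
    Kop φ μ (fun u => a * X u) = fun s => a * Kop φ μ X s := by
  funext s; unfold Kop; split_ifs
  · rw [show (fun s' => (μ s s' : ℝ≥0∞) * (a * X s')) = fun s' => a * ((μ s s' : ℝ≥0∞) * X s')
      from funext fun s' => mul_left_comm _ _ _]
    exact ENNReal.tsum_mul_left
  · rfl

lemma Kn_add (n : ℕ) (X Y : S → ℝ≥0∞) :
    (Kop φ μ)^[n] (fun u => X u + Y u) = fun s => (Kop φ μ)^[n] X s + (Kop φ μ)^[n] Y s := by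
  induction n with
  | zero => rfl
  | succ n ih =>
      rw [Function.iterate_succ_apply', Function.iterate_succ_apply', Function.iterate_succ_apply',
        ih, Kop_add]

lemma Kn_smul (n : ℕ) (a : ℝ≥0∞) (X : S → ℝ≥0∞) :
    (Kop φ μ)^[n] (fun u => a * X u) = fun s => a * (Kop φ μ)^[n] X s := by
  induction n with
  | zero => rfl
  | succ n ih =>
      rw [Function.iterate_succ_apply', Function.iterate_succ_apply', ih, Kop_smul]

lemma Kop_sum {ι : Type*} (r : Finset ι) (g : ι → S → ℝ≥0∞) :
    Kop φ μ (fun u => ∑ k ∈ r, g k u) = fun s => ∑ k ∈ r, Kop φ μ (g k) s := by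
  classical
  induction r using Finset.induction_on with
  | empty =>
      funext s; unfold Kop; split_ifs <;> simp
  | insert _ _ hx ih =>
      simp_rw [Finset.sum_insert hx]
      rw [Kop_add, ih]

lemma Kop_absorb (n : ℕ) (X : S → ℝ≥0∞) {s : S} (hs : s ∉ φ) :
    (Kop φ μ)^[n] X s = X s := by
  induction n with
  | zero => rfl
  | succ n ih => rw [Function.iterate_succ_apply', Kop, if_neg hs, ih]

lemma mu_tsum_one (hμ : ∀ s, ∑' s', μ s s' = 1) (s : S) :
    ∑' s', (μ s s' : ℝ≥0∞) = 1 := by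
  have hsum : Summable (μ s) := by
    by_contra h
    have := tsum_eq_zero_of_not_summable h
    rw [hμ s] at this; exact one_ne_zero this
  rw [← ENNReal.coe_tsum hsum, hμ s]; rfl

lemma Kop_le_const (hμ : ∀ s, ∑' s', μ s s' = 1) {c : ℝ≥0∞} {X : S → ℝ≥0∞}
    (hX : ∀ u, X u ≤ c) (s : S) : Kop φ μ X s ≤ c := by
  unfold Kop; split_ifs
  · calc ∑' s', (μ s s' : ℝ≥0∞) * X s' ≤ ∑' s', (μ s s' : ℝ≥0∞) * c :=
        ENNReal.tsum_le_tsum fun s' => mul_le_mul_right (hX s') _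
    _ = c := by rw [ENNReal.tsum_mul_right, mu_tsum_one μ hμ s, one_mul]
  · exact hX s

lemma Kn_le_const (hμ : ∀ s, ∑' s', μ s s' = 1) (n : ℕ) {c : ℝ≥0∞} {X : S → ℝ≥0∞}
    (hX : ∀ u, X u ≤ c) (s : S) : (Kop φ μ)^[n] X s ≤ c := by
  induction n generalizing s with
  | zero => exact hX s
  | succ n ih => rw [Function.iterate_succ_apply']; exact Kop_le_const φ μ hμ (fun u => ih u) s

lemma Kop_iInf [Countable S] (hμ : ∀ s, ∑' s', μ s s' = 1) {c : ℝ≥0∞} (hc : c ≠ ⊤)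
    {X : ℕ → S → ℝ≥0∞} (hanti : ∀ u, Antitone fun m => X m u) (hbdd : ∀ m u, X m u ≤ c)
    (s : S) : ⨅ m, Kop φ μ (X m) s = Kop φ μ (fun u => ⨅ m, X m u) s := by
  unfold Kop; split_ifs with hs
  · have hdom : ∑' u, (μ s u : ℝ≥0∞) * X 0 u ≠ ⊤ := by
      refine ne_top_of_le_ne_top hc ?_
      calc ∑' u, (μ s u : ℝ≥0∞) * X 0 u ≤ ∑' u, (μ s u : ℝ≥0∞) * c :=
          ENNReal.tsum_le_tsum fun u => mul_le_mul_right (hbdd 0 u) _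
        _ = c := by rw [ENNReal.tsum_mul_right, mu_tsum_one μ hμ s, one_mul]
    rw [tsum_iInf_antitone' (f := fun m u => (μ s u : ℝ≥0∞) * X m u)
      (fun u => fun a b hab => mul_le_mul_right (hanti u hab) _) hdom]
    exact tsum_congr fun u => (ENNReal.mul_iInf' (fun h => absurd h ENNReal.coe_ne_top)
      (fun _ => inferInstance)).symm
  · rfl

/-- Unrolling a subinvariant from below. -/
lemma unroll_le (h X : S → ℝ≥0∞) (hX : ∀ s, X s ≤ h s + Kop φ μ X s) (n : ℕ) (s : S) :
    X s ≤ ∑ k ∈ Finset.range n, (Kop φ μ)^[k] h s + (Kop φ μ)^[n] X s := by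
  induction n generalizing s with
  | zero => simpa using le_rfl
  | succ n ih =>
      calc X s ≤ h s + Kop φ μ X s := hX s
      _ ≤ h s + Kop φ μ (fun u => ∑ k ∈ Finset.range n, (Kop φ μ)^[k] h u + (Kop φ μ)^[n] X u) s :=
          add_le_add_right (Kop_mono φ μ (fun u => ih u) s) _
      _ = h s + (∑ k ∈ Finset.range n, (Kop φ μ)^[k+1] h s + (Kop φ μ)^[n+1] X s) := by
          rw [show (fun u => ∑ k ∈ Finset.range n, (Kop φ μ)^[k] h u + (Kop φ μ)^[n] X u)
              = fun u => (fun v => ∑ k ∈ Finset.range n, (Kop φ μ)^[k] h v) u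
                + (fun v => (Kop φ μ)^[n] X v) u from rfl, Kop_add, Kop_sum]
          simp only [← Function.iterate_succ_apply' (Kop φ μ)]
      _ = ∑ k ∈ Finset.range (n+1), (Kop φ μ)^[k] h s + (Kop φ μ)^[n+1] X s := by
          rw [Finset.sum_range_succ' (fun k => (Kop φ μ)^[k] h s) n]
          simp only [Function.iterate_zero_apply]
          ring

/-- Unrolling a superinvariant from above. -/
lemma unroll_ge (h X : S → ℝ≥0∞) (hX : ∀ s, h s + Kop φ μ X s ≤ X s) (n : ℕ) (s : S) :
    ∑ k ∈ Finset.range n, (Kop φ μ)^[k] h s + (Kop φ μ)^[n] X s ≤ X s := by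
  induction n generalizing s with
  | zero => simpa using le_rfl
  | succ n ih =>
      refine le_trans ?_ (hX s)
      have hK : Kop φ μ (fun u => ∑ k ∈ Finset.range n, (Kop φ μ)^[k] h u + (Kop φ μ)^[n] X u) s
          ≤ Kop φ μ X s := Kop_mono φ μ (fun u => ih u) s
      rw [show (fun u => ∑ k ∈ Finset.range n, (Kop φ μ)^[k] h u + (Kop φ μ)^[n] X u)
          = fun u => (fun v => ∑ k ∈ Finset.range n, (Kop φ μ)^[k] h v) u
            + (fun v => (Kop φ μ)^[n] X v) u from rfl, Kop_add, Kop_sum] at hK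
      simp only [← Function.iterate_succ_apply' (Kop φ μ)] at hK
      refine le_trans (le_of_eq ?_) (add_le_add_right hK _)
      rw [Finset.sum_range_succ' (fun k => (Kop φ μ)^[k] h s) n]
      simp only [Function.iterate_zero_apply]
      ring

end LBAux

section LBAux2
variable {S : Type*} (φ : Set S) (μ : S → S → ℝ≥0)

noncomputable def indE : S → ℝ≥0∞ := fun s => if s ∈ φ then 1 else 0

noncomputable def IinE (I : S → ℝ≥0∞) : S → ℝ≥0∞ := fun s => if s ∈ φ then I s else 0

noncomputable def dabE (I : S → ℝ≥0∞) (s s' : S) : ℝ≥0∞ := (I s' - I s) ⊔ (I s - I s')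

noncomputable def BmE (I : S → ℝ≥0∞) (m : ℕ) : S → ℝ≥0∞ :=
  fun s => if s ∈ φ then
    ∑' s', (μ s s' : ℝ≥0∞) * (dabE I s s' * (Kop φ μ)^[m] (indE φ) s') else 0

lemma indE_le_one : ∀ u, indE φ u ≤ 1 := fun u => by
  unfold indE; split_ifs <;> simp

lemma Kop_ind_le (hμ : ∀ s, ∑' s', μ s s' = 1) : Kop φ μ (indE φ) ≤ indE φ := by
  intro v
  by_cases hv : v ∈ φ
  · refine le_trans (Kop_le_const φ μ hμ (indE_le_one φ) v) ?_
    unfold indE; rw [if_pos hv]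
  · unfold Kop; rw [if_neg hv]

lemma Kn_ind_anti (hμ : ∀ s, ∑' s', μ s s' = 1) (u : S) :
    Antitone fun n => (Kop φ μ)^[n] (indE φ) u := by
  apply antitone_nat_of_succ_le
  intro n
  rw [Function.iterate_succ_apply]
  exact (Kop_mono φ μ).iterate n (Kop_ind_le φ μ hμ) u

lemma keyC (I : S → ℝ≥0∞) :
    ∀ n s, (Kop φ μ)^[n] (IinE φ I) s ≤
      I s * (Kop φ μ)^[n] (indE φ) s +
        ∑ k ∈ Finset.range n, (Kop φ μ)^[k] (BmE φ μ I (n - 1 - k)) s := by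
  intro n
  induction n with
  | zero =>
      intro s
      simp only [Function.iterate_zero_apply, Finset.range_zero, Finset.sum_empty, add_zero,
        IinE, indE]
      split_ifs <;> simp
  | succ n ih =>
      intro s
      by_cases hs : s ∈ φ
      · rw [Function.iterate_succ_apply', Kop, if_pos hs]
        have hpt : ∀ s', (μ s s' : ℝ≥0∞) * (Kop φ μ)^[n] (IinE φ I) s'
            ≤ I s * ((μ s s' : ℝ≥0∞) * (Kop φ μ)^[n] (indE φ) s')
              + (μ s s' : ℝ≥0∞) * (dabE I s s' * (Kop φ μ)^[n] (indE φ) s')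
              + ∑ k ∈ Finset.range n,
                  (μ s s' : ℝ≥0∞) * (Kop φ μ)^[k] (BmE φ μ I (n - 1 - k)) s' := by
          intro s'
          have h1 : I s' ≤ I s + dabE I s s' :=
            le_add_tsub.trans (add_le_add_right le_sup_left _)
          calc (μ s s' : ℝ≥0∞) * (Kop φ μ)^[n] (IinE φ I) s'
              ≤ (μ s s' : ℝ≥0∞) * (I s' * (Kop φ μ)^[n] (indE φ) s'
                  + ∑ k ∈ Finset.range n, (Kop φ μ)^[k] (BmE φ μ I (n - 1 - k)) s') :=
                mul_le_mul_right (ih s') _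
            _ ≤ (μ s s' : ℝ≥0∞) * ((I s + dabE I s s') * (Kop φ μ)^[n] (indE φ) s'
                  + ∑ k ∈ Finset.range n, (Kop φ μ)^[k] (BmE φ μ I (n - 1 - k)) s') :=
                mul_le_mul_right (add_le_add_left (mul_le_mul_left h1 _) _) _
            _ = I s * ((μ s s' : ℝ≥0∞) * (Kop φ μ)^[n] (indE φ) s')
                  + (μ s s' : ℝ≥0∞) * (dabE I s s' * (Kop φ μ)^[n] (indE φ) s')
                  + ∑ k ∈ Finset.range n,
                      (μ s s' : ℝ≥0∞) * (Kop φ μ)^[k] (BmE φ μ I (n - 1 - k)) s' := by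
                rw [mul_add, Finset.mul_sum, add_mul, mul_add]
                ring_nf
        calc ∑' s', (μ s s' : ℝ≥0∞) * (Kop φ μ)^[n] (IinE φ I) s'
            ≤ ∑' s', (I s * ((μ s s' : ℝ≥0∞) * (Kop φ μ)^[n] (indE φ) s')
                + (μ s s' : ℝ≥0∞) * (dabE I s s' * (Kop φ μ)^[n] (indE φ) s')
                + ∑ k ∈ Finset.range n,
                    (μ s s' : ℝ≥0∞) * (Kop φ μ)^[k] (BmE φ μ I (n - 1 - k)) s') :=
              ENNReal.tsum_le_tsum hpt
          _ = I s * (∑' s', (μ s s' : ℝ≥0∞) * (Kop φ μ)^[n] (indE φ) s')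
                + (∑' s', (μ s s' : ℝ≥0∞) * (dabE I s s' * (Kop φ μ)^[n] (indE φ) s'))
                + ∑ k ∈ Finset.range n,
                    (∑' s', (μ s s' : ℝ≥0∞) * (Kop φ μ)^[k] (BmE φ μ I (n - 1 - k)) s') := by
              rw [ENNReal.tsum_add, ENNReal.tsum_add, ENNReal.tsum_mul_left,
                Summable.tsum_finsetSum (fun _ _ => ENNReal.summable)]
          _ = I s * (Kop φ μ)^[n + 1] (indE φ) s
                + (BmE φ μ I n s + ∑ k ∈ Finset.range n,
                    (Kop φ μ)^[k + 1] (BmE φ μ I (n - 1 - k)) s) := by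
              have e1 : (Kop φ μ)^[n + 1] (indE φ) s
                  = ∑' s', (μ s s' : ℝ≥0∞) * (Kop φ μ)^[n] (indE φ) s' := by
                rw [Function.iterate_succ_apply', Kop, if_pos hs]
              have e2 : BmE φ μ I n s
                  = ∑' s', (μ s s' : ℝ≥0∞) * (dabE I s s' * (Kop φ μ)^[n] (indE φ) s') := by
                simp only [BmE, if_pos hs]
              have e3 : ∀ k, (Kop φ μ)^[k + 1] (BmE φ μ I (n - 1 - k)) s
                  = ∑' s', (μ s s' : ℝ≥0∞) * (Kop φ μ)^[k] (BmE φ μ I (n - 1 - k)) s' := fun k => by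
                rw [Function.iterate_succ_apply', Kop, if_pos hs]
              rw [e1, e2, ← add_assoc]
              congr 1
              exact Finset.sum_congr rfl fun k _ => (e3 k).symm
          _ = I s * (Kop φ μ)^[n + 1] (indE φ) s
                + ∑ k ∈ Finset.range (n + 1), (Kop φ μ)^[k] (BmE φ μ I (n + 1 - 1 - k)) s := by
              congr 1
              rw [Finset.sum_range_succ' (fun k => (Kop φ μ)^[k] (BmE φ μ I (n + 1 - 1 - k)) s) n]
              simp only [Function.iterate_zero_apply, Nat.add_sub_cancel, Nat.sub_zero]
              rw [add_comm]
              congr 1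
              refine Finset.sum_congr rfl fun k _ => ?_
              rw [show n - 1 - k = n - (k + 1) from by omega]
      · rw [Function.iterate_succ_apply', Kop, if_neg hs, Kop_absorb φ μ n _ hs]
        unfold IinE
        rw [if_neg hs]
        exact zero_le

end LBAux2

section LBAux3
variable {S : Type*} (φ : Set S) (μ : S → S → ℝ≥0)

lemma key_inf_zero [Countable S] (hμ : ∀ s, ∑' s', μ s s' = 1) (I : S → ℝ≥0∞)
    (hIfin : ∀ s, I s < ⊤) (c : ℝ≥0)
    (hc : ∀ s, (if s ∈ φ then
      ∑' s', (μ s s' : ℝ≥0∞) * ((I s' - I s) ⊔ (I s - I s')) else 0) ≤ (c : ℝ≥0∞))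
    (s0 : S) (hptop : ∑' n, (Kop φ μ)^[n] (indE φ) s0 ≠ ⊤) :
    ⨅ n, (Kop φ μ)^[n] (IinE φ I) s0 = 0 := by
  classical
  -- `p` facts
  have hp0 : Filter.Tendsto (fun n => (Kop φ μ)^[n] (indE φ) s0) Filter.atTop (nhds 0) := by
    have htail : Filter.Tendsto (fun m => ∑' k, (Kop φ μ)^[k + m] (indE φ) s0)
        Filter.atTop (nhds 0) := ENNReal.tendsto_sum_nat_add _ hptop
    refine tendsto_of_tendsto_of_tendsto_of_le_of_le tendsto_const_nhds htail
      (fun n => zero_le) (fun n => ?_)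
    simpa using ENNReal.le_tsum (f := fun k => (Kop φ μ)^[k + n] (indE φ) s0) 0
  -- the limit `q` of the survival probabilities, and its vanishing along the chain
  have hq0 : ∀ k, (Kop φ μ)^[k] (fun u => ⨅ m, (Kop φ μ)^[m] (indE φ) u) s0 = 0 := by
    intro k
    refine le_antisymm ?_ (zero_le)
    have hb : ∀ m, (Kop φ μ)^[k] (fun u => ⨅ m', (Kop φ μ)^[m'] (indE φ) u) s0
        ≤ (Kop φ μ)^[m + k] (indE φ) s0 := by
      intro m
      have h1 : ∀ u, (fun u => ⨅ m', (Kop φ μ)^[m'] (indE φ) u) u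
          ≤ (Kop φ μ)^[m] (indE φ) u := fun u => iInf_le _ m
      calc (Kop φ μ)^[k] (fun u => ⨅ m', (Kop φ μ)^[m'] (indE φ) u) s0
          ≤ (Kop φ μ)^[k] ((Kop φ μ)^[m] (indE φ)) s0 := (Kop_mono φ μ).iterate k h1 s0
        _ = (Kop φ μ)^[m + k] (indE φ) s0 := by
            rw [show m + k = k + m from Nat.add_comm m k,
              Function.iterate_add_apply (Kop φ μ) k m (indE φ)]
    exact ge_of_tendsto (hp0.comp (tendsto_add_atTop_nat k)) (Filter.Eventually.of_forall hb)
  -- `B` facts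
  have hBanti : ∀ m₁ m₂, m₁ ≤ m₂ → ∀ u, BmE φ μ I m₂ u ≤ BmE φ μ I m₁ u := by
    intro m₁ m₂ h u
    unfold BmE
    split_ifs
    · exact ENNReal.tsum_le_tsum fun s' =>
        mul_le_mul_right (mul_le_mul_right (Kn_ind_anti φ μ hμ s' h) _) _
    · exact le_rfl
  have hBle : ∀ m u, BmE φ μ I m u ≤ (c : ℝ≥0∞) := by
    intro m u
    by_cases hu : u ∈ φ
    · have h1 : BmE φ μ I m u ≤ ∑' s', (μ u s' : ℝ≥0∞) * dabE I u s' := by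
        unfold BmE
        rw [if_pos hu]
        refine ENNReal.tsum_le_tsum fun s' => mul_le_mul_right ?_ _
        calc dabE I u s' * (Kop φ μ)^[m] (indE φ) s'
            ≤ dabE I u s' * 1 := mul_le_mul_right (Kn_le_const φ μ hμ m (indE_le_one φ) s') _
          _ = dabE I u s' := mul_one _
      refine h1.trans ?_
      have h2 := hc u
      rw [if_pos hu] at h2
      exact h2
    · unfold BmE; rw [if_neg hu]; exact zero_le
  have hKB_le : ∀ k j, (Kop φ μ)^[k] (BmE φ μ I j) s0
      ≤ (c : ℝ≥0∞) * (Kop φ μ)^[k] (indE φ) s0 := by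
    intro k j
    have hBj : ∀ u, BmE φ μ I j u ≤ (c : ℝ≥0∞) * indE φ u := by
      intro u
      by_cases hu : u ∈ φ
      · have : indE φ u = 1 := by unfold indE; rw [if_pos hu]
        rw [this, mul_one]; exact hBle j u
      · have h1 : BmE φ μ I j u = 0 := by unfold BmE; rw [if_neg hu]
        rw [h1]; exact zero_le
    calc (Kop φ μ)^[k] (BmE φ μ I j) s0
        ≤ (Kop φ μ)^[k] (fun u => (c : ℝ≥0∞) * indE φ u) s0 := (Kop_mono φ μ).iterate k hBj s0
      _ = (c : ℝ≥0∞) * (Kop φ μ)^[k] (indE φ) s0 := congrFun (Kn_smul φ μ k _ _) s0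
  -- the limit of `B m`
  have hBinf_eq : ∀ u, (⨅ m, BmE φ μ I m u)
      = (if u ∈ φ then ∑' s', (μ u s' : ℝ≥0∞) *
          (dabE I u s' * ⨅ m, (Kop φ μ)^[m] (indE φ) s') else 0) := by
    intro u
    by_cases hu : u ∈ φ
    · simp only [BmE, if_pos hu]
      rw [tsum_iInf_antitone' (f := fun m s' => (μ u s' : ℝ≥0∞) *
          (dabE I u s' * (Kop φ μ)^[m] (indE φ) s'))
        (fun s' a b hab => mul_le_mul_right (mul_le_mul_right (Kn_ind_anti φ μ hμ s' hab) _) _)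
        ?_]
      · refine tsum_congr fun s' => ?_
        have hd : dabE I u s' ≠ ⊤ := by
          have hb : dabE I u s' ≤ I s' + I u := by
            unfold dabE
            exact sup_le (tsub_le_self.trans le_self_add) (tsub_le_self.trans le_add_self)
          exact ne_top_of_le_ne_top (ENNReal.add_lt_top.mpr ⟨hIfin s', hIfin u⟩).ne hb
        rw [← ENNReal.mul_iInf' (a := (μ u s' : ℝ≥0∞))
            (fun h => absurd h ENNReal.coe_ne_top) (fun _ => inferInstance),
          ← ENNReal.mul_iInf' (a := dabE I u s') (fun h => absurd h hd)
            (fun _ => inferInstance)]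
      · refine ne_top_of_le_ne_top (ENNReal.coe_ne_top (r := c)) ?_
        have h2 := hc u
        rw [if_pos hu] at h2
        refine le_trans (ENNReal.tsum_le_tsum fun s' => mul_le_mul_right ?_ _) h2
        calc dabE I u s' * (Kop φ μ)^[0] (indE φ) s'
            ≤ dabE I u s' * 1 := mul_le_mul_right (Kn_le_const φ μ hμ 0 (indE_le_one φ) s') _
          _ = dabE I u s' := mul_one _
    · simp only [BmE, if_neg hu, iInf_const]
  -- the limit of `B m` vanishes along the chain
  have hKBinf0 : ∀ k, (Kop φ μ)^[k] (fun u => ⨅ m, BmE φ μ I m u) s0 = 0 := by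
    intro k
    refine le_antisymm ?_ (zero_le)
    have hle : ∀ u, (⨅ m, BmE φ μ I m u)
        ≤ Kop φ μ (fun v => ⊤ * ⨅ m, (Kop φ μ)^[m] (indE φ) v) u
          + ⊤ * Kop φ μ (fun v => ⨅ m, (Kop φ μ)^[m] (indE φ) v) u := by
      intro u
      rw [hBinf_eq u]
      by_cases hu : u ∈ φ
      · rw [if_pos hu]
        calc ∑' s', (μ u s' : ℝ≥0∞) * (dabE I u s' * ⨅ m, (Kop φ μ)^[m] (indE φ) s')
            ≤ ∑' s', (μ u s' : ℝ≥0∞) * ((I s' + I u) * ⨅ m, (Kop φ μ)^[m] (indE φ) s') :=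
              ENNReal.tsum_le_tsum fun s' => mul_le_mul_right (mul_le_mul_left
                (sup_le (tsub_le_self.trans le_self_add) (tsub_le_self.trans le_add_self)) _) _
          _ = ∑' s', ((μ u s' : ℝ≥0∞) * (I s' * ⨅ m, (Kop φ μ)^[m] (indE φ) s')
                + I u * ((μ u s' : ℝ≥0∞) * ⨅ m, (Kop φ μ)^[m] (indE φ) s')) := by
              refine tsum_congr fun s' => ?_
              rw [add_mul, mul_add]
              ring_nf
          _ = (∑' s', (μ u s' : ℝ≥0∞) * (I s' * ⨅ m, (Kop φ μ)^[m] (indE φ) s'))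
                + I u * ∑' s', (μ u s' : ℝ≥0∞) * ⨅ m, (Kop φ μ)^[m] (indE φ) s' := by
              rw [ENNReal.tsum_add, ENNReal.tsum_mul_left]
          _ ≤ (∑' s', (μ u s' : ℝ≥0∞) * (⊤ * ⨅ m, (Kop φ μ)^[m] (indE φ) s'))
                + ⊤ * ∑' s', (μ u s' : ℝ≥0∞) * ⨅ m, (Kop φ μ)^[m] (indE φ) s' :=
              add_le_add (ENNReal.tsum_le_tsum fun s' => mul_le_mul_right
                  (mul_le_mul_left le_top _) _) (mul_le_mul_left le_top _)
          _ = Kop φ μ (fun v => ⊤ * ⨅ m, (Kop φ μ)^[m] (indE φ) v) u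
                + ⊤ * Kop φ μ (fun v => ⨅ m, (Kop φ μ)^[m] (indE φ) v) u := by
              rw [Kop, if_pos hu, Kop, if_pos hu]
      · rw [if_neg hu]; exact zero_le
    calc (Kop φ μ)^[k] (fun u => ⨅ m, BmE φ μ I m u) s0
        ≤ (Kop φ μ)^[k] (fun u => Kop φ μ (fun v => ⊤ * ⨅ m, (Kop φ μ)^[m] (indE φ) v) u
            + ⊤ * Kop φ μ (fun v => ⨅ m, (Kop φ μ)^[m] (indE φ) v) u) s0 :=
          (Kop_mono φ μ).iterate k hle s0
      _ = (Kop φ μ)^[k] (Kop φ μ (fun v => ⊤ * ⨅ m, (Kop φ μ)^[m] (indE φ) v)) s0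
            + (Kop φ μ)^[k] (fun v => ⊤ * Kop φ μ (fun w => ⨅ m, (Kop φ μ)^[m] (indE φ) w) v) s0 :=
          congrFun (Kn_add φ μ k _ _) s0
      _ = ⊤ * (Kop φ μ)^[k + 1] (fun v => ⨅ m, (Kop φ μ)^[m] (indE φ) v) s0
            + ⊤ * (Kop φ μ)^[k] (Kop φ μ (fun w => ⨅ m, (Kop φ μ)^[m] (indE φ) w)) s0 := by
          rw [← Function.iterate_succ_apply (Kop φ μ) k, congrFun (Kn_smul φ μ (k + 1) ⊤ _) s0,
            congrFun (Kn_smul φ μ k ⊤ _) s0]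
      _ = 0 := by
          rw [← Function.iterate_succ_apply (Kop φ μ) k, hq0 (k + 1)]
          simp
  -- interchange of `⨅ m` and the chain
  have hswap : ∀ k u, (⨅ m, (Kop φ μ)^[k] (BmE φ μ I m) u)
      = (Kop φ μ)^[k] (fun v => ⨅ m, BmE φ μ I m v) u := by
    intro k
    induction k with
    | zero => intro u; simp
    | succ k ihk =>
        intro u
        simp only [Function.iterate_succ_apply']
        rw [Kop_iInf φ μ hμ (c := (c : ℝ≥0∞)) ENNReal.coe_ne_top
          (X := fun m => (Kop φ μ)^[k] (BmE φ μ I m))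
          (fun u' a b hab => (Kop_mono φ μ).iterate k (hBanti a b hab) u')
          (fun m u' => Kn_le_const φ μ hμ k (hBle m) u') u]
        rw [show (fun u' => ⨅ m, (Kop φ μ)^[k] (BmE φ μ I m) u')
          = (Kop φ μ)^[k] (fun v => ⨅ m, BmE φ μ I m v) from funext ihk]
  -- the main limit argument
  refine le_antisymm ?_ (zero_le)
  have hTm : ∀ m : ℕ, (⨅ n, (Kop φ μ)^[n] (IinE φ I) s0)
      ≤ (c : ℝ≥0∞) * ∑' j, (Kop φ μ)^[j + m] (indE φ) s0 := by
    intro m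
    have hterm : ∀ k, Filter.Tendsto (fun n => (Kop φ μ)^[k] (BmE φ μ I (n - 1 - k)) s0)
        Filter.atTop (nhds 0) := by
      intro k
      have hanti' : Antitone fun n => (Kop φ μ)^[k] (BmE φ μ I (n - 1 - k)) s0 :=
        fun n₁ n₂ h => (Kop_mono φ μ).iterate k (hBanti _ _ (by omega)) s0
      have hlim := tendsto_atTop_iInf hanti'
      have hz : (⨅ n, (Kop φ μ)^[k] (BmE φ μ I (n - 1 - k)) s0) = 0 := by
        refine le_antisymm ?_ (zero_le)
        have h1 : (⨅ n, (Kop φ μ)^[k] (BmE φ μ I (n - 1 - k)) s0)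
            ≤ ⨅ m', (Kop φ μ)^[k] (BmE φ μ I m') s0 :=
          le_iInf fun m' => iInf_le_of_le (m' + k + 1)
            (le_of_eq (by rw [show m' + k + 1 - 1 - k = m' from by omega]))
        refine h1.trans (le_of_eq ?_)
        rw [hswap k s0, hKBinf0 k]
      rwa [hz] at hlim
    have hgl : Filter.Tendsto (fun n => I s0 * (Kop φ μ)^[n] (indE φ) s0
        + ((∑ k ∈ Finset.range m, (Kop φ μ)^[k] (BmE φ μ I (n - 1 - k)) s0)
          + (c : ℝ≥0∞) * ∑' j, (Kop φ μ)^[j + m] (indE φ) s0)) Filter.atTop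
        (nhds (I s0 * 0 + ((∑ _k ∈ Finset.range m, (0 : ℝ≥0∞))
          + (c : ℝ≥0∞) * ∑' j, (Kop φ μ)^[j + m] (indE φ) s0))) := by
      refine Filter.Tendsto.add (ENNReal.Tendsto.const_mul hp0 (Or.inr (hIfin s0).ne))
        (Filter.Tendsto.add (tendsto_finset_sum _ fun k _ => hterm k) tendsto_const_nhds)
    rw [mul_zero, zero_add, Finset.sum_const_zero, zero_add] at hgl
    refine ge_of_tendsto hgl ?_
    filter_upwards [Filter.eventually_ge_atTop m] with n hn
    refine (iInf_le _ n).trans ((keyC φ μ I n s0).trans ?_)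
    refine add_le_add_right ?_ _
    rw [← Finset.sum_range_add_sum_Ico _ hn]
    refine add_le_add_right ?_ _
    calc ∑ k ∈ Finset.Ico m n, (Kop φ μ)^[k] (BmE φ μ I (n - 1 - k)) s0
        ≤ ∑ k ∈ Finset.Ico m n, (c : ℝ≥0∞) * (Kop φ μ)^[k] (indE φ) s0 :=
          Finset.sum_le_sum fun k _ => hKB_le k _
      _ = (c : ℝ≥0∞) * ∑ k ∈ Finset.Ico m n, (Kop φ μ)^[k] (indE φ) s0 :=
          (Finset.mul_sum _ _ _).symm
      _ ≤ (c : ℝ≥0∞) * ∑' j, (Kop φ μ)^[j + m] (indE φ) s0 := by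
          refine mul_le_mul_right ?_ _
          rw [Finset.sum_Ico_eq_sum_range]
          calc ∑ j ∈ Finset.range (n - m), (Kop φ μ)^[m + j] (indE φ) s0
              = ∑ j ∈ Finset.range (n - m), (Kop φ μ)^[j + m] (indE φ) s0 :=
                Finset.sum_congr rfl fun j _ => by rw [Nat.add_comm]
            _ ≤ ∑' j, (Kop φ μ)^[j + m] (indE φ) s0 := ENNReal.sum_le_tsum _
  have hT : Filter.Tendsto (fun m => (c : ℝ≥0∞) * ∑' j, (Kop φ μ)^[j + m] (indE φ) s0)
      Filter.atTop (nhds 0) := by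
    have h1 := ENNReal.tendsto_sum_nat_add (fun n => (Kop φ μ)^[n] (indE φ) s0) hptop
    have h2 := ENNReal.Tendsto.const_mul (a := (c : ℝ≥0∞)) h1 (Or.inr ENNReal.coe_ne_top)
    simpa using h2
  exact ge_of_tendsto hT (Filter.Eventually.of_forall hTm)

end LBAux3

/-- **Inductive lower bounds on expected runtimes.** Let `t` and `I` be finite
expectations such that `I` harmonizes with `t`, `I` is conditionally difference bounded,
and `Φ_t(I)` is finite. Every runtime subinvariant `I ⪯ Ψ_t(I)` is a lower bound on the
expected runtime `lfp Ψ_t` of the loop. -/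
theorem lower_bound_ert {S : Type*} [Countable S]
    (φ : Set S) (μ : S → S → ℝ≥0) (hμ : ∀ s, ∑' s', μ s s' = 1)
    (e t I : S → ℝ≥0∞) (ht : FinExp t) (hI : FinExp I)
    (hharm : Harmonizes φ I t) (hcdb : CondDiffBdd φ μ I)
    (hPhiI : FinExp (Phi φ μ t I))
    (hsub : I ≤ Psi φ μ e t I) :
    I ≤ lfpPsi φ μ e t := by
  classical
  obtain ⟨c, hc⟩ := hcdb
  have hc' : ∀ s, (if s ∈ φ then
      ∑' s', (μ s s' : ℝ≥0∞) * ((I s' - I s) ⊔ (I s - I s')) else 0) ≤ (c : ℝ≥0∞) := by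
    intro s
    have h1 := hc s
    rwa [dExp] at h1
  intro s0
  have hfixf : Psi φ μ e t (lfpPsi φ μ e t) = lfpPsi φ μ e t :=
    OrderHom.map_lfp (⟨Psi φ μ e t, Psi_mono φ μ e t⟩ : (S → ℝ≥0∞) →o (S → ℝ≥0∞))
  have hL_eq : ∀ s, lfpPsi φ μ e t s = Psi φ μ e t (lfpPsi φ μ e t) s := fun s =>
    (congrFun hfixf s).symm
  by_cases hLtop : lfpPsi φ μ e t s0 = ⊤
  · rw [hLtop]; exact le_top
  have hsub' : ∀ s, I s ≤ (if s ∈ φ then 1 + e s else 0) + Kop φ μ I s := by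
    intro s
    by_cases hs : s ∈ φ
    · have h1 := hsub s
      rw [Psi, if_pos hs, wpF] at h1
      rw [if_pos hs, Kop, if_pos hs]
      exact h1
    · rw [if_neg hs, Kop, if_neg hs, zero_add]
  have hLstep : ∀ s, (if s ∈ φ then 1 + e s else 0) + Kop φ μ (lfpPsi φ μ e t) s
      ≤ lfpPsi φ μ e t s := by
    intro s
    by_cases hs : s ∈ φ
    · rw [hL_eq s, Psi, if_pos hs, if_pos hs, Kop, if_pos hs, wpF]
    · rw [if_neg hs, Kop, if_neg hs, zero_add]
  have htoutle : ∀ u, (if u ∈ φ then 0 else t u) ≤ lfpPsi φ μ e t u := by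
    intro u
    by_cases hu : u ∈ φ
    · rw [if_pos hu]; exact zero_le
    · rw [if_neg hu, hL_eq u, Psi, if_neg hu]; exact le_add_self
  have hIsplit : I = fun u => (if u ∈ φ then 0 else t u) + IinE φ I u := by
    funext u
    by_cases hu : u ∈ φ
    · simp [IinE, hu]
    · simp [IinE, hu, hharm u hu]
  have hmain : ∀ n, I s0 ≤ lfpPsi φ μ e t s0 + (Kop φ μ)^[n] (IinE φ I) s0 := by
    intro n
    have h1 := unroll_le φ μ (fun s => if s ∈ φ then 1 + e s else 0) I hsub' n s0
    have h2 : (Kop φ μ)^[n] I s0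
        = (Kop φ μ)^[n] (fun u => if u ∈ φ then 0 else t u) s0
          + (Kop φ μ)^[n] (IinE φ I) s0 := by
      conv_lhs => rw [hIsplit]
      exact congrFun (Kn_add φ μ n _ _) s0
    rw [h2] at h1
    refine h1.trans ?_
    rw [← add_assoc]
    refine add_le_add_left ?_ _
    have h3 : (Kop φ μ)^[n] (fun u => if u ∈ φ then 0 else t u) s0
        ≤ (Kop φ μ)^[n] (lfpPsi φ μ e t) s0 := (Kop_mono φ μ).iterate n htoutle s0
    exact (add_le_add_right h3 _).trans (unroll_ge φ μ _ _ hLstep n s0)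
  have hind_le : ∀ u, indE φ u ≤ (if u ∈ φ then 1 + e u else 0) := by
    intro u
    unfold indE
    split_ifs with hu
    · exact le_self_add
    · exact le_rfl
  have hptop : ∑' n, (Kop φ μ)^[n] (indE φ) s0 ≠ ⊤ := by
    refine ne_top_of_le_ne_top hLtop ?_
    rw [ENNReal.tsum_eq_iSup_nat]
    refine iSup_le fun n => ?_
    calc ∑ k ∈ Finset.range n, (Kop φ μ)^[k] (indE φ) s0
        ≤ ∑ k ∈ Finset.range n, (Kop φ μ)^[k] (fun u => if u ∈ φ then 1 + e u else 0) s0 :=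
          Finset.sum_le_sum fun k _ => (Kop_mono φ μ).iterate k hind_le s0
      _ ≤ _ + (Kop φ μ)^[n] (lfpPsi φ μ e t) s0 := le_self_add
      _ ≤ lfpPsi φ μ e t s0 := unroll_ge φ μ _ _ hLstep n s0
  have hainf := key_inf_zero φ μ hμ I hI c hc' s0 hptop
  have hfin := le_iInf hmain
  rwa [← ENNReal.add_iInf, hainf, add_zero] at hfin
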